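/- Let λ = (λ₁ ≥ ... ≥ λₙ) be a partition with λₙ ≥ 1 such that the Ferrers edge ideal I_λ ⊂ R = k[x₁,...,xₙ,y₁,...,y_{λ₁}] is unmixed. Then λ_j + j − 1 = n for every j in the index set {c₁,...,c_k} of distinct values of λ, where c₁ = 1 and c_i marks the positions where λ strictly decreases; equivalently, every minimal prime (x₁,...,x_{c_i−1}, y₁,...,y_{λ_{c_i}}) of I_λ has height n. -/

import Mathlib

open MvPolynomial

/-- The height of an ideal: the infimum of the heights (in the prime spectrum)
of the primes containing it. -/
noncomputable def idealHeight {R : Type*} [CommRing R] (I : Ideal R) : ℕ∞ :=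
  sInf {h : ℕ∞ | ∃ p : PrimeSpectrum R, I ≤ p.asIdeal ∧ Order.height p = h}

open Order

lemma idealHeight_of_prime {R : Type*} [CommRing R] (p : PrimeSpectrum R) :
    idealHeight p.asIdeal = Order.height p := by
  apply le_antisymm
  · exact sInf_le ⟨p, le_rfl, rfl⟩
  · apply le_sInf
    rintro h ⟨q, hle, rfl⟩
    exact Order.height_mono ((PrimeSpectrum.asIdeal_le_asIdeal p q).mp hle)

lemma height_add_one_le {α : Type*} [Preorder α] {a b : α} (h : a < b) :
    Order.height a + 1 ≤ Order.height b := by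
  rw [Order.height_eq_iSup_lt_height b]
  exact le_iSup₂ (f := fun y (_ : y < b) => Order.height y + 1) a h

lemma myHeight_orderIso {α β : Type*} [Preorder α] [Preorder β] (f : α ≃o β) (x : α) :
    Order.height (f x) = Order.height x := by
  apply le_antisymm
  · apply Order.height_le
    intro p hp
    have := Order.length_le_height_last (p := p.map f.symm f.symm.strictMono)
    simpa [RelSeries.last_map, hp] using this
  · apply Order.height_le
    intro p hp
    have := Order.length_le_height_last (p := p.map f f.strictMono)
    simpa [RelSeries.last_map, hp] using this

/-- Order iso of prime spectra induced by a ring equiv. -/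
noncomputable def specOrderIso {R S : Type*} [CommRing R] [CommRing S] (e : R ≃+* S) :
    PrimeSpectrum S ≃o PrimeSpectrum R where
  toFun q := ⟨q.asIdeal.comap (e : R →+* S), Ideal.IsPrime.comap _⟩
  invFun p := ⟨p.asIdeal.comap (e.symm : S →+* R), Ideal.IsPrime.comap _⟩
  left_inv q := by
    ext x
    show x ∈ Ideal.comap _ (Ideal.comap _ _) ↔ _
    rw [Ideal.mem_comap, Ideal.mem_comap, RingEquiv.coe_toRingHom, RingEquiv.coe_toRingHom,
      RingEquiv.apply_symm_apply]
  right_inv p := by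
    ext x
    show x ∈ Ideal.comap _ (Ideal.comap _ _) ↔ _
    rw [Ideal.mem_comap, Ideal.mem_comap, RingEquiv.coe_toRingHom, RingEquiv.coe_toRingHom,
      RingEquiv.symm_apply_apply]
  map_rel_iff' {q q'} := by
    show (⟨q.asIdeal.comap (e : R →+* S), _⟩ : PrimeSpectrum R) ≤ ⟨q'.asIdeal.comap (e : R →+* S), _⟩ ↔ _
    rw [← PrimeSpectrum.asIdeal_le_asIdeal, ← PrimeSpectrum.asIdeal_le_asIdeal]
    constructor
    · intro h x hx
      have h2 := h (Ideal.mem_comap.mpr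
        (show e (e.symm x) ∈ q.asIdeal by rw [RingEquiv.apply_symm_apply]; exact hx))
      rw [Ideal.mem_comap, RingEquiv.coe_toRingHom, RingEquiv.apply_symm_apply] at h2
      exact h2
    · intro h x hx
      exact h hx


attribute [local instance] MvPolynomial.algebraMvPolynomial

/-- In `MvPolynomial PUnit R`, three strictly increasing primes cannot all contract
to the same prime of `R`. -/
lemma comap_C_lt_of_lt_of_lt {R : Type*} [CommRing R]
    {q₀ q₁ q₂ : Ideal (MvPolynomial PUnit R)} (hp₀ : q₀.IsPrime) (hp₁ : q₁.IsPrime)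
    (hp₂ : q₂.IsPrime) (h01 : q₀ < q₁) (h12 : q₁ < q₂) :
    q₀.comap (C : R →+* MvPolynomial PUnit R) < q₂.comap (C : R →+* MvPolynomial PUnit R) := by
  refine lt_of_le_of_ne (Ideal.comap_mono (le_of_lt (h01.trans h12))) (fun heq => ?_)
  set p : Ideal R := q₀.comap (C : R →+* MvPolynomial PUnit R) with hp
  have hpPrime : p.IsPrime := Ideal.IsPrime.comap _
  -- quotient step
  set D := R ⧸ p
  set φ : MvPolynomial PUnit R →+* MvPolynomial PUnit D :=
    MvPolynomial.map (Ideal.Quotient.mk p) with hφ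
  have hφs : Function.Surjective φ := MvPolynomial.map_surjective _ Ideal.Quotient.mk_surjective
  have hker : ∀ {q : Ideal (MvPolynomial PUnit R)}, q₀ ≤ q → RingHom.ker φ ≤ q := by
    intro q hq f hf
    apply MvPolynomial.mem_ideal_of_coeff_mem_ideal
    intro mo
    rw [Ideal.mem_comap]
    apply hq
    rw [← Ideal.mem_comap, ← hp]
    rw [RingHom.mem_ker] at hf
    have : (MvPolynomial.map (Ideal.Quotient.mk p) f).coeff mo = 0 := by rw [hf]; rfl
    rw [MvPolynomial.coeff_map] at this
    rw [Ideal.Quotient.eq_zero_iff_mem] at this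
    exact this
  have hcomapmap : ∀ {q : Ideal (MvPolynomial PUnit R)}, q.IsPrime → q₀ ≤ q →
      Ideal.comap φ (Ideal.map φ q) = q := by
    intro q _ hq
    rw [Ideal.comap_map_of_surjective φ hφs, ← RingHom.ker_eq_comap_bot]
    exact sup_eq_left.mpr (hker hq)
  set Q₀ := Ideal.map φ q₀
  set Q₁ := Ideal.map φ q₁
  set Q₂ := Ideal.map φ q₂
  have hQ₀ : Q₀.IsPrime := Ideal.map_isPrime_of_surjective hφs (hker le_rfl)
  have hQ₁ : Q₁.IsPrime := Ideal.map_isPrime_of_surjective hφs (hker h01.le)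
  have hQ₂ : Q₂.IsPrime := Ideal.map_isPrime_of_surjective hφs (hker (h01.trans h12).le)
  have hQ01 : Q₀ < Q₁ := by
    refine lt_of_le_of_ne (Ideal.map_mono h01.le) (fun h => h01.ne ?_)
    conv_lhs => rw [← hcomapmap hp₀ le_rfl]
    conv_rhs => rw [← hcomapmap hp₁ h01.le]
    rw [show Ideal.map φ q₀ = Ideal.map φ q₁ from h]
  have hQ12 : Q₁ < Q₂ := by
    refine lt_of_le_of_ne (Ideal.map_mono h12.le) (fun h => h12.ne ?_)
    conv_lhs => rw [← hcomapmap hp₁ h01.le]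
    conv_rhs => rw [← hcomapmap hp₂ (h01.trans h12).le]
    rw [show Ideal.map φ q₁ = Ideal.map φ q₂ from h]
  -- comap of C on Q₂ is ⊥
  have hbot : Ideal.comap (C : D →+* MvPolynomial PUnit D) Q₂ = ⊥ := by
    ext d
    simp only [Ideal.mem_comap, Ideal.mem_bot]
    constructor
    · intro hd
      obtain ⟨r, rfl⟩ := Ideal.Quotient.mk_surjective d
      have hCr : (C (Ideal.Quotient.mk p r) : MvPolynomial PUnit D) = φ (C r) := by
        rw [hφ, MvPolynomial.map_C]
      rw [hCr] at hd
      have : C r ∈ Ideal.comap φ Q₂ := hd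
      rw [hcomapmap hp₂ (h01.trans h12).le] at this
      have : r ∈ p := by rw [heq]; exact this
      rwa [Ideal.Quotient.eq_zero_iff_mem]
    · rintro rfl
      simp
  have hDdom : IsDomain D := Ideal.Quotient.isDomain p
  -- localization step
  set K := FractionRing D
  set M : Submonoid (MvPolynomial PUnit D) :=
    (nonZeroDivisors D).map (C : D →+* MvPolynomial PUnit D) with hM
  have hloc : IsLocalization M (MvPolynomial PUnit K) := MvPolynomial.isLocalization _ _
  have hdisj : ∀ {Q : Ideal (MvPolynomial PUnit D)}, Q ≤ Q₂ → Disjoint (M : Set (MvPolynomial PUnit D)) (Q : Set (MvPolynomial PUnit D)) := by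
    intro Q hQ
    rw [Set.disjoint_left]
    rintro x ⟨d, hd, rfl⟩ hx
    have : d ∈ Ideal.comap (C : D →+* MvPolynomial PUnit D) Q₂ := hQ hx
    rw [hbot, Ideal.mem_bot] at this
    exact absurd this (mem_nonZeroDivisors_iff_ne_zero.mp hd)
  haveI := hloc
  set L := MvPolynomial PUnit K with hL
  set f := IsLocalization.orderIsoOfPrime M L with hf
  set P₀ := f.symm ⟨Q₀, hQ₀, hdisj (hQ01.le.trans hQ12.le)⟩ with hP₀
  set P₁ := f.symm ⟨Q₁, hQ₁, hdisj hQ12.le⟩ with hP₁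
  set P₂ := f.symm ⟨Q₂, hQ₂, hdisj le_rfl⟩ with hP₂
  have hP01 : (P₀ : Ideal L) < (P₁ : Ideal L) := by
    exact Subtype.coe_lt_coe.mpr (f.symm.lt_iff_lt.mpr (Subtype.mk_lt_mk.mpr hQ01))
  have hP12 : (P₁ : Ideal L) < (P₂ : Ideal L) := by
    exact Subtype.coe_lt_coe.mpr (f.symm.lt_iff_lt.mpr (Subtype.mk_lt_mk.mpr hQ12))
  -- transfer to K[X]
  set ε := (MvPolynomial.pUnitAlgEquiv K).toRingEquiv with hε
  set g : Ideal L → Ideal (Polynomial K) := fun J => J.comap (ε.symm : Polynomial K →+* L) with hg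
  have hgmono : StrictMono g := by
    apply Monotone.strictMono_of_injective
    · intro a b hab
      exact Ideal.comap_mono hab
    · intro a b hab
      have : ∀ J : Ideal L, (g J).comap (ε : L →+* Polynomial K) = J := by
        intro J
        rw [hg]
        ext x
        simp only [Ideal.mem_comap]
        rw [RingEquiv.coe_toRingHom, RingEquiv.coe_toRingHom, RingEquiv.symm_apply_apply]
      rw [← this a, ← this b, hab]
  have hgprime : ∀ (J : Ideal L), J.IsPrime → (g J).IsPrime := by
    intro J hJ
    exact Ideal.IsPrime.comap _
  have h1ne : g (P₁ : Ideal L) ≠ ⊥ := by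
    intro hb
    exact absurd (hb ▸ hgmono hP01) (by simp)
  haveI : (g (P₁ : Ideal L)).IsPrime := hgprime (P₁ : Ideal L) (Subtype.prop P₁)
  haveI : (g (P₂ : Ideal L)).IsPrime := hgprime (P₂ : Ideal L) (Subtype.prop P₂)
  have hmax : (g (P₁ : Ideal L)).IsMaximal := IsPrime.to_maximal_ideal h1ne
  exact (hgprime (P₂ : Ideal L) (Subtype.prop P₂)).ne_top (hmax.1.2 _ (hgmono hP12))

def boundedChains (R : Type*) [CommRing R] (B : ℕ) : Prop :=
  ∀ c : LTSeries (PrimeSpectrum R), c.length ≤ B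

lemma boundedChains_of_ringEquiv {R S : Type*} [CommRing R] [CommRing S] (e : R ≃+* S) {B : ℕ}
    (h : boundedChains R B) : boundedChains S B := by
  intro c
  exact h (c.map (specOrderIso e) (specOrderIso e).strictMono)

lemma boundedChains_punit {R : Type*} [CommRing R] {B : ℕ} (h : boundedChains R B) :
    boundedChains (MvPolynomial PUnit R) (2 * B + 1) := by
  intro c
  set d := c.length with hd
  have h2 : ∀ j : ℕ, j ≤ d / 2 → 2 * j < d + 1 := by omega
  let e : LTSeries (PrimeSpectrum R) :=
    { length := d / 2
      toFun := fun i => ⟨(c ⟨2 * i.val, h2 i.val (Nat.lt_succ_iff.mp i.isLt)⟩).asIdeal.comap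
        (C : R →+* MvPolynomial PUnit R), Ideal.IsPrime.comap _⟩
      step := fun i => by
        have hi : i.val < d / 2 := i.isLt
        have e0 : 2 * i.val < d + 1 := by omega
        have e1 : 2 * i.val + 1 < d + 1 := by omega
        have e2 : 2 * (i.val + 1) < d + 1 := by omega
        have l01 : c ⟨2 * i.val, e0⟩ < c ⟨2 * i.val + 1, e1⟩ :=
          c.strictMono (by exact Fin.mk_lt_mk.mpr (by omega))
        have l12 : c ⟨2 * i.val + 1, e1⟩ < c ⟨2 * (i.val + 1), e2⟩ :=
          c.strictMono (by exact Fin.mk_lt_mk.mpr (by omega))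
        have key := comap_C_lt_of_lt_of_lt
          (c ⟨2 * i.val, e0⟩).isPrime (c ⟨2 * i.val + 1, e1⟩).isPrime
          (c ⟨2 * (i.val + 1), e2⟩).isPrime
          ((PrimeSpectrum.asIdeal_lt_asIdeal _ _).mpr l01)
          ((PrimeSpectrum.asIdeal_lt_asIdeal _ _).mpr l12)
        apply (PrimeSpectrum.asIdeal_lt_asIdeal _ _).mp
        exact key }
  have := h e
  have : d / 2 ≤ B := this
  omega

lemma subsingleton_boundedChains (R : Type*) [CommRing R] [Subsingleton (PrimeSpectrum R)] :
    boundedChains R 0 := by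
  intro c
  by_contra hc
  have h1 : 0 < c.length := Nat.pos_of_ne_zero (fun h => hc (le_of_eq h))
  exact (c.strictMono (Fin.mk_lt_mk.mpr h1 : (⟨0, by omega⟩ : Fin (c.length + 1)) < ⟨c.length, by omega⟩)).ne (Subsingleton.elim _ _)

lemma exists_boundedChains (k : Type*) [Field k] (N : ℕ) :
    ∃ B, boundedChains (MvPolynomial (Fin N) k) B := by
  induction N with
  | zero =>
    refine ⟨0, boundedChains_of_ringEquiv ((isEmptyAlgEquiv k (Fin 0)).symm.toRingEquiv) ?_⟩
    exact subsingleton_boundedChains k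
  | succ N ih =>
    obtain ⟨B, hB⟩ := ih
    refine ⟨2 * B + 1, boundedChains_of_ringEquiv ?_ (boundedChains_punit hB)⟩
    exact (((renameEquiv k
      ((_root_.finSuccEquiv N).trans ((Equiv.optionEquivSumPUnit (Fin N)).trans
        (Equiv.sumComm (Fin N) PUnit.{1})))).trans (sumAlgEquiv k PUnit.{1} (Fin N))).symm).toRingEquiv

lemma height_ne_top {k : Type*} [Field k] {n m : ℕ}
    (p : PrimeSpectrum (MvPolynomial (Fin n ⊕ Fin m) k)) : Order.height p ≠ ⊤ := by
  obtain ⟨B, hB⟩ := exists_boundedChains k (n + m)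
  have hB2 : boundedChains (MvPolynomial (Fin n ⊕ Fin m) k) B :=
    boundedChains_of_ringEquiv (renameEquiv k finSumFinEquiv.symm).toRingEquiv hB
  have : Order.height p ≤ (B : ℕ∞) :=
    Order.height_le (fun c _ => Nat.cast_le.mpr (hB2 c))
  exact ne_top_of_le_ne_top (by simp) this

section VarIdeal

variable (k : Type*) [Field k] {σ : Type*} [Fintype σ] [DecidableEq σ]

/-- The prime ideal generated by a finite set of variables. -/
noncomputable def varIdeal (S : Finset σ) : Ideal (MvPolynomial σ k) :=
  Ideal.span (X '' (S : Set σ))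

lemma X_mem_varIdeal_iff {S : Finset σ} {s : σ} : X s ∈ varIdeal k S ↔ s ∈ S := by
  constructor
  · intro h
    rw [varIdeal, mem_ideal_span_X_image] at h
    obtain ⟨i, hi, hne⟩ := h (Finsupp.single s 1) (by simp [support_X])
    rw [Finsupp.single_apply] at hne
    by_cases he : s = i
    · exact he ▸ hi
    · simp [he] at hne
  · intro h
    exact Ideal.subset_span ⟨s, h, rfl⟩

/-- Evaluation killing the variables in `S`. -/
noncomputable def killVars (S : Finset σ) :
    MvPolynomial σ k →ₐ[k] MvPolynomial {x : σ // x ∉ S} k :=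
  aeval (fun s => if h : s ∈ S then 0 else X ⟨s, h⟩)

/-- Self-map version. -/
noncomputable def killVars' (S : Finset σ) : MvPolynomial σ k →ₐ[k] MvPolynomial σ k :=
  aeval (fun s => if s ∈ S then 0 else X s)

lemma killVars'_eq (S : Finset σ) :
    (rename (Subtype.val : {x : σ // x ∉ S} → σ)).comp (killVars k S) = killVars' k S := by
  apply algHom_ext
  intro s
  simp only [AlgHom.comp_apply, killVars, killVars', aeval_X]
  by_cases h : s ∈ S
  · simp [h]
  · simp [h]

lemma sub_killVars'_mem (S : Finset σ) (f : MvPolynomial σ k) :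
    f - killVars' k S f ∈ varIdeal k S := by
  induction f using MvPolynomial.induction_on' with
  | monomial u a =>
    rw [killVars', aeval_monomial]
    by_cases hc : ∃ i ∈ u.support, i ∈ S
    · obtain ⟨i, hiu, hiS⟩ := hc
      have hz : (u.prod fun i e => (if i ∈ S then 0 else X i : MvPolynomial σ k) ^ e) = 0 := by
        apply Finset.prod_eq_zero hiu
        simp only [if_pos hiS]
        exact zero_pow (by simpa using hiu)
      rw [hz, mul_zero, sub_zero]
      rw [varIdeal, mem_ideal_span_X_image]
      intro mo hmo
      have : mo = u := Finset.mem_singleton.mp (support_monomial_subset hmo)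
      exact ⟨i, hiS, by simpa [this] using hiu⟩
    · push_neg at hc
      have hp : (u.prod fun i e => (if i ∈ S then 0 else X i : MvPolynomial σ k) ^ e) =
          u.prod fun i e => (X i : MvPolynomial σ k) ^ e := by
        apply Finset.prod_congr rfl
        intro i hi
        simp only [if_neg (hc i hi)]
      rw [hp, algebraMap_eq, ← monomial_eq, sub_self]
      exact Ideal.zero_mem _
  | add p q hp hq =>
    have : p + q - killVars' k S (p + q) = (p - killVars' k S p) + (q - killVars' k S q) := by
      rw [map_add]; ring
    rw [this]
    exact Ideal.add_mem _ hp hq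

lemma varIdeal_eq_ker (S : Finset σ) :
    varIdeal k S = RingHom.ker (killVars k S) := by
  apply le_antisymm
  · rw [varIdeal, Ideal.span_le]
    rintro x ⟨s, hs, rfl⟩
    rw [SetLike.mem_coe, RingHom.mem_ker]
    have hs' : s ∈ S := hs
    simp [killVars, hs']
  · intro f hf
    rw [RingHom.mem_ker] at hf
    have h0 : killVars' k S f = 0 := by
      rw [← killVars'_eq, AlgHom.comp_apply, hf, map_zero]
    have := sub_killVars'_mem k S f
    rwa [h0, sub_zero] at this

lemma varIdeal_isPrime (S : Finset σ) : (varIdeal k S).IsPrime := by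
  rw [varIdeal_eq_ker]
  exact RingHom.ker_isPrime _

/-- The point of the prime spectrum given by a set of variables. -/
noncomputable def varPt (S : Finset σ) : PrimeSpectrum (MvPolynomial σ k) :=
  ⟨varIdeal k S, varIdeal_isPrime k S⟩

lemma varIdeal_lt_varIdeal {S T : Finset σ} (hST : S ⊆ T) {t : σ} (ht : t ∈ T) (ht' : t ∉ S) :
    varIdeal k S < varIdeal k T := by
  refine lt_of_le_of_ne (Ideal.span_mono (Set.image_mono (by exact_mod_cast hST))) (fun h => ?_)
  exact ht' ((X_mem_varIdeal_iff k).mp (h ▸ (X_mem_varIdeal_iff k).mpr ht))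

lemma varPt_height_of_card_le {S T : Finset σ} (hST : S.card = T.card) :
    Order.height (varPt k S) = Order.height (varPt k T) := by
  classical
  let e0 : {x : σ // x ∈ S} ≃ {x : σ // x ∈ T} := Finset.equivOfCardEq hST
  let perm : Equiv.Perm σ := Equiv.extendSubtype e0
  have himg : S.image perm = T := by
    apply Finset.eq_of_subset_of_card_le
    · intro y hy
      rw [Finset.mem_image] at hy
      obtain ⟨x, hx, rfl⟩ := hy
      rw [Equiv.extendSubtype_apply_of_mem e0 x hx]
      exact (e0 ⟨x, hx⟩).2
    · rw [Finset.card_image_of_injective _ perm.injective, hST]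
  set e : MvPolynomial σ k ≃+* MvPolynomial σ k := (renameEquiv k perm).toRingEquiv with he
  have hmap : Ideal.map (e : MvPolynomial σ k →+* MvPolynomial σ k) (varIdeal k S) =
      varIdeal k T := by
    rw [varIdeal, varIdeal, Ideal.map_span, Set.image_image]
    have h1 : ∀ x : σ, (e : MvPolynomial σ k →+* MvPolynomial σ k) (X x) = X (perm x) :=
      fun x => rename_X perm x
    have h2 : (fun x : σ => (e : MvPolynomial σ k →+* MvPolynomial σ k) (X x)) '' (S : Set σ)
        = X '' ((T : Finset σ) : Set σ) := by
      rw [← himg, Finset.coe_image]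
      rw [show X '' (⇑perm '' (S : Set σ)) = (fun x : σ => X (perm x)) '' (S : Set σ) from
        Set.image_image X (⇑perm) (S : Set σ)]
      exact Set.image_congr (fun x _ => h1 x)
    rw [h2]
  have hcomap : Ideal.comap (e : MvPolynomial σ k →+* MvPolynomial σ k) (varIdeal k T) =
      varIdeal k S := by
    rw [← hmap]
    exact Ideal.comap_map_of_bijective _ e.bijective
  have hpt : specOrderIso e (varPt k T) = varPt k S := by
    apply PrimeSpectrum.ext
    exact hcomap
  rw [← hpt, Order.height_orderIso]

lemma height_add_one_le_of_card_lt {S T : Finset σ} (h : S.card < T.card) :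
    Order.height (varPt k S) + 1 ≤ Order.height (varPt k T) := by
  obtain ⟨T', hT'sub, hT'card⟩ := Finset.exists_subset_card_eq h.le
  have h1 : Order.height (varPt k S) = Order.height (varPt k T') :=
    varPt_height_of_card_le k hT'card.symm
  have hne : T' ≠ T := fun hEq => by rw [hEq] at hT'card; omega
  obtain ⟨t, htT, htT'⟩ := Finset.exists_of_ssubset (lt_of_le_of_ne hT'sub hne)
  have hlt : varPt k T' < varPt k T :=
    (PrimeSpectrum.asIdeal_lt_asIdeal _ _).mp (varIdeal_lt_varIdeal k hT'sub htT htT')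
  rw [h1]
  exact _root_.height_add_one_le hlt

lemma card_eq_of_height_eq {S T : Finset σ}
    (hh : Order.height (varPt k S) = Order.height (varPt k T))
    (hfin : Order.height (varPt k S) ≠ ⊤) : S.card = T.card := by
  by_contra hne
  rcases Nat.lt_or_ge S.card T.card with hlt | hge
  · have h2 := height_add_one_le_of_card_lt k hlt
    rw [← hh] at h2
    exact lt_irrefl _ ((ENat.add_one_le_iff hfin).mp h2)
  · have hlt : T.card < S.card := by omega
    have h2 := height_add_one_le_of_card_lt k hlt
    rw [hh] at h2
    have hfin' : Order.height (varPt k T) ≠ ⊤ := hh ▸ hfin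
    exact lt_irrefl _ ((ENat.add_one_le_iff hfin').mp h2)

end VarIdeal

lemma card_filter_lt (n a : ℕ) (h : a ≤ n) :
    (Finset.univ.filter (fun i : Fin n => (i : ℕ) < a)).card = a := by
  apply Finset.card_eq_of_bijective (fun i hi => (⟨i, lt_of_lt_of_le hi h⟩ : Fin n))
  · intro x hx
    exact ⟨x.val, (Finset.mem_filter.mp hx).2, rfl⟩
  · intro i hi
    exact Finset.mem_filter.mpr ⟨Finset.mem_univ _, hi⟩
  · intro i j hi hj hij
    exact congrArg Fin.val hij

/-- If the Ferrers edge ideal `I_λ` is unmixed (all minimal primes have the same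
height), then `λ_j + j − 1 = n` at every position where `λ` starts a new value
(0-based: `λ_t + t = n` whenever `t = 0` or `λ_t < λ_{t−1}`); equivalently, every
minimal prime of `I_λ` has height `n`. -/
theorem stmt17 (k : Type*) [Field k] (n m : ℕ) (hn : 0 < n)
    (lam : Fin n → ℕ) (hanti : ∀ i j : Fin n, i ≤ j → lam j ≤ lam i)
    (hpos : ∀ i : Fin n, 1 ≤ lam i) (hm : lam ⟨0, hn⟩ = m)
    (I : Ideal (MvPolynomial (Fin n ⊕ Fin m) k))
    (hI : I = Ideal.span {f | ∃ (i : Fin n) (j : Fin m),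
      (j : ℕ) < lam i ∧ f = X (Sum.inl i) * X (Sum.inr j)})
    (hunmixed : ∀ p ∈ I.minimalPrimes, ∀ q ∈ I.minimalPrimes,
      idealHeight p = idealHeight q) :
    ∀ t : Fin n,
      ((t : ℕ) = 0 ∨ ∃ s : Fin n, (s : ℕ) + 1 = (t : ℕ) ∧ lam t < lam s) →
      lam t + (t : ℕ) = n := by
  classical
  intro t ht
  have hm0 : 0 < m := hm ▸ hpos ⟨0, hn⟩
  have hlamt_le : lam t ≤ m := hm ▸ hanti ⟨0, hn⟩ t (by simp [Fin.le_def])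
  have hkey : ∀ i : Fin n, (i : ℕ) < (t : ℕ) → lam t < lam i := by
    intro i hi
    rcases ht with h0 | ⟨s, hs1, hs2⟩
    · omega
    · exact lt_of_lt_of_le hs2 (hanti i s (by rw [Fin.le_def]; omega))
  set St : Finset (Fin n ⊕ Fin m) :=
    ((Finset.univ.filter (fun i : Fin n => (i : ℕ) < (t : ℕ))).image Sum.inl) ∪
    ((Finset.univ.filter (fun j : Fin m => (j : ℕ) < lam t)).image Sum.inr) with hSt
  set Stop : Finset (Fin n ⊕ Fin m) := Finset.univ.image Sum.inl with hStop
  have hmemSt : ∀ s : Fin n ⊕ Fin m, s ∈ St ↔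
      ((∃ i : Fin n, (i : ℕ) < (t : ℕ) ∧ Sum.inl i = s) ∨
       (∃ j : Fin m, (j : ℕ) < lam t ∧ Sum.inr j = s)) := by
    intro s
    simp [hSt]
  have hmemStop : ∀ s : Fin n ⊕ Fin m, s ∈ Stop ↔ ∃ i : Fin n, Sum.inl i = s := by
    intro s
    simp [hStop]
  -- I is contained in both variable ideals
  have hIleSt : I ≤ varIdeal k St := by
    rw [hI, Ideal.span_le]
    rintro f ⟨i, j, hj, rfl⟩
    by_cases hi : (i : ℕ) < (t : ℕ)
    · apply Ideal.mul_mem_right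
      exact (X_mem_varIdeal_iff k).mpr ((hmemSt _).mpr (Or.inl ⟨i, hi, rfl⟩))
    · apply Ideal.mul_mem_left
      have : lam i ≤ lam t := hanti t i (by rw [Fin.le_def]; omega)
      exact (X_mem_varIdeal_iff k).mpr ((hmemSt _).mpr (Or.inr ⟨j, by omega, rfl⟩))
  have hIleStop : I ≤ varIdeal k Stop := by
    rw [hI, Ideal.span_le]
    rintro f ⟨i, j, hj, rfl⟩
    apply Ideal.mul_mem_right
    exact (X_mem_varIdeal_iff k).mpr ((hmemStop _).mpr ⟨i, rfl⟩)
  -- both are minimal primes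
  have hmin1 : varIdeal k St ∈ I.minimalPrimes := by
    refine ⟨⟨varIdeal_isPrime k St, hIleSt⟩, ?_⟩
    rintro q ⟨hqp, hIq⟩ hqle
    rw [varIdeal, Ideal.span_le]
    rintro x ⟨s, hsS, rfl⟩
    rw [SetLike.mem_coe]
    rcases (hmemSt s).mp hsS with ⟨i, hi, rfl⟩ | ⟨j, hj, rfl⟩
    · -- x-variable, i < t
      have hltm : lam t < m := lt_of_lt_of_le (hkey i hi) (hm ▸ hanti ⟨0, hn⟩ i (by simp [Fin.le_def]))
      set j0 : Fin m := ⟨lam t, hltm⟩ with hj0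
      have hgen : X (Sum.inl i) * X (Sum.inr j0) ∈ q := by
        apply hIq
        rw [hI]
        exact Ideal.subset_span ⟨i, j0, by simpa [hj0] using hkey i hi, rfl⟩
      rcases hqp.mem_or_mem hgen with h | h
      · exact h
      · exfalso
        have := (X_mem_varIdeal_iff k).mp (hqle h)
        rcases (hmemSt _).mp this with ⟨i', _, hi'⟩ | ⟨j', hj', hj''⟩
        · exact (Sum.inl_ne_inr hi').elim
        · have : (j' : ℕ) = lam t := by
            have := Sum.inr_injective hj''
            rw [this]
          omega
    · -- y-variable, j < lam t
      have hgen : X (Sum.inl t) * X (Sum.inr j) ∈ q := by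
        apply hIq
        rw [hI]
        exact Ideal.subset_span ⟨t, j, hj, rfl⟩
      rcases hqp.mem_or_mem hgen with h | h
      · exfalso
        have := (X_mem_varIdeal_iff k).mp (hqle h)
        rcases (hmemSt _).mp this with ⟨i', hi', hi''⟩ | ⟨j', _, hj''⟩
        · have : (i' : ℕ) = (t : ℕ) := by
            have := Sum.inl_injective hi''
            rw [this]
          omega
        · exact (Sum.inl_ne_inr hj''.symm).elim
      · exact h
  have hmin2 : varIdeal k Stop ∈ I.minimalPrimes := by
    refine ⟨⟨varIdeal_isPrime k Stop, hIleStop⟩, ?_⟩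
    rintro q ⟨hqp, hIq⟩ hqle
    rw [varIdeal, Ideal.span_le]
    rintro x ⟨s, hsS, rfl⟩
    rw [SetLike.mem_coe]
    obtain ⟨i, rfl⟩ := (hmemStop s).mp hsS
    set j0 : Fin m := ⟨0, hm0⟩ with hj0
    have hgen : X (Sum.inl i) * X (Sum.inr j0) ∈ q := by
      apply hIq
      rw [hI]
      exact Ideal.subset_span ⟨i, j0, by simpa [hj0] using Nat.lt_of_lt_of_le Nat.zero_lt_one (hpos i), rfl⟩
    rcases hqp.mem_or_mem hgen with h | h
    · exact h
    · exfalso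
      have := (X_mem_varIdeal_iff k).mp (hqle h)
      obtain ⟨i', hi'⟩ := (hmemStop _).mp this
      exact (Sum.inl_ne_inr hi').elim
  -- equal heights imply equal cardinalities
  have hh := hunmixed _ hmin1 _ hmin2
  have hh1 : idealHeight (varIdeal k St) = Order.height (varPt k St) :=
    idealHeight_of_prime (varPt k St)
  have hh2 : idealHeight (varIdeal k Stop) = Order.height (varPt k Stop) :=
    idealHeight_of_prime (varPt k Stop)
  have hh' : Order.height (varPt k St) = Order.height (varPt k Stop) := by
    rw [← hh1, ← hh2, hh]
  have hcard : St.card = Stop.card :=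
    card_eq_of_height_eq k hh' (height_ne_top (varPt k St))
  -- compute the cardinalities
  have hcardtop : Stop.card = n := by
    rw [hStop, Finset.card_image_of_injective _ Sum.inl_injective, Finset.card_univ,
      Fintype.card_fin]
  have hdisj : Disjoint
      ((Finset.univ.filter (fun i : Fin n => (i : ℕ) < (t : ℕ))).image (Sum.inl : Fin n → Fin n ⊕ Fin m))
      ((Finset.univ.filter (fun j : Fin m => (j : ℕ) < lam t)).image (Sum.inr : Fin m → Fin n ⊕ Fin m)) := by
    rw [Finset.disjoint_left]
    rintro a ha hb
    rw [Finset.mem_image] at ha hb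
    obtain ⟨i, _, rfl⟩ := ha
    obtain ⟨j, _, hj⟩ := hb
    exact Sum.inl_ne_inr hj.symm
  have hcardSt : St.card = (t : ℕ) + lam t := by
    rw [hSt, Finset.card_union_of_disjoint hdisj,
      Finset.card_image_of_injective _ Sum.inl_injective,
      Finset.card_image_of_injective _ Sum.inr_injective,
      card_filter_lt n t (le_of_lt t.isLt), card_filter_lt m (lam t) hlamt_le]
  omega
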